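/- Let w¹,…,wᵗ be atomic saturable designs with pairwise distinct first letters, and let a,b be complementary letters with w^i_1 ≠ b for all i. Then W = a w¹ ⋯ wᵗ b is an atomic saturable design (for the structure enclosing S¹⋯Sᵗ in a base pair (1,|W|)). -/

import Mathlib

open scoped Classical

/-- An RNA nucleotide. -/
inductive Base | A | U | C | G
deriving DecidableEq, Inhabited, Repr

/-- The Watson-Crick pairing relation (only G-C and A-U pairs allowed). -/
def wcPair : Base → Base → Prop
  | .G, .C => True | .C, .G => True
  | .A, .U => True | .U, .A => True
  | _, _ => False

/-- The Nussinov-Jacobson pairing relation (G-C, A-U and G-U pairs allowed). -/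
def njPair : Base → Base → Prop
  | .G, .C => True | .C, .G => True
  | .A, .U => True | .U, .A => True
  | .G, .U => True | .U, .G => True
  | _, _ => False

/-- An RNA (pseudoknot-free) secondary structure, 0-indexed positions. -/
structure SecStr where
  len : ℕ
  pairs : Finset (ℕ × ℕ)
  lt : ∀ p ∈ pairs, p.1 < p.2
  ub : ∀ p ∈ pairs, p.2 < len
  once : ∀ p ∈ pairs, ∀ q ∈ pairs, p ≠ q →
    p.1 ≠ q.1 ∧ p.1 ≠ q.2 ∧ p.2 ≠ q.1 ∧ p.2 ≠ q.2
  noncross : ∀ p ∈ pairs, ∀ q ∈ pairs,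
    ¬ (p.1 < q.1 ∧ q.1 < p.2 ∧ p.2 < q.2)

def SecStr.pairedAt (S : SecStr) (i : ℕ) : Prop := ∃ p ∈ S.pairs, p.1 = i ∨ p.2 = i
def SecStr.unpairedAt (S : SecStr) (i : ℕ) : Prop := i < S.len ∧ ¬ S.pairedAt i
def SecStr.saturated (S : SecStr) : Prop := ∀ i < S.len, S.pairedAt i

/-- A structure is compatible with a sequence `w` (w.r.t. pairing relation `R`)
if it has the right length and all base pairs are `R`-valid. -/
def compat {α : Type*} [Inhabited α] (R : α → α → Prop) (w : List α) (S : SecStr) : Prop :=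
  S.len = w.length ∧ ∀ p ∈ S.pairs, R (w.getD p.1 default) (w.getD p.2 default)

/-- Base-pair-sum free energy of a structure on a sequence. -/
noncomputable def energy {α : Type*} [Inhabited α] (E : α → α → ℝ) (w : List α)
    (S : SecStr) : ℝ :=
  ∑ p ∈ S.pairs, E (w.getD p.1 default) (w.getD p.2 default)

/-- `w` is a Δ-design for `S`: `S` is compatible with `w`, and every other
compatible structure has energy at least `energy E w S + Δ`. -/
def isDesign {α : Type*} [Inhabited α] (R : α → α → Prop) (E : α → α → ℝ) (Δ : ℝ)
    (w : List α) (S : SecStr) : Prop :=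
  compat R w S ∧ ∀ S' : SecStr, compat R w S' → S' ≠ S →
    energy E w S' ≥ energy E w S + Δ

/- Tree representation machinery. -/
def encloses (q p : ℕ × ℕ) : Prop := q.1 < p.1 ∧ p.2 < q.2
def SecStr.hasParent (S : SecStr) (p : ℕ × ℕ) : Prop := ∃ q ∈ S.pairs, encloses q p
def SecStr.isParentOf (S : SecStr) (q p : ℕ × ℕ) : Prop :=
  q ∈ S.pairs ∧ p ∈ S.pairs ∧ encloses q p ∧ ¬ ∃ m ∈ S.pairs, encloses q m ∧ encloses m p

/-- Degree of a paired node: number of paired children plus one for the parent (if any). -/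
noncomputable def SecStr.pairDeg (S : SecStr) (p : ℕ × ℕ) : ℕ :=
  (S.pairs.filter (fun c => S.isParentOf p c)).card + (if S.hasParent p then 1 else 0)
/-- Degree of the virtual root: number of top-level base pairs. -/
noncomputable def SecStr.rootDeg (S : SecStr) : ℕ :=
  (S.pairs.filter (fun p => ¬ S.hasParent p)).card
/-- All nodes of the tree representation (including the virtual root) have degree ≤ d. -/
def SecStr.degLE (S : SecStr) (d : ℕ) : Prop :=
  S.rootDeg ≤ d ∧ ∀ p ∈ S.pairs, S.pairDeg p ≤ d

/-- A sequence is saturable if a saturated structure is compatible with it. -/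
def saturable {α : Type*} [Inhabited α] (R : α → α → Prop) (w : List α) : Prop :=
  ∃ S : SecStr, compat R w S ∧ S.saturated
/-- Atomic saturable: saturable, and no (nonempty) proper prefix is saturable. -/
def atomicSaturable {α : Type*} [Inhabited α] (R : α → α → Prop) (w : List α) : Prop :=
  saturable R w ∧ ∀ k, 0 < k → k < w.length → ¬ saturable R (w.take k)

/- Motifs. -/
def SecStr.unpChildOfPair (S : SecStr) (q : ℕ × ℕ) (u : ℕ) : Prop :=
  S.unpairedAt u ∧ q.1 < u ∧ u < q.2 ∧
    ¬ ∃ m ∈ S.pairs, q.1 < m.1 ∧ m.1 < u ∧ u < m.2 ∧ m.2 < q.2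
def SecStr.unpChildOfRoot (S : SecStr) (u : ℕ) : Prop :=
  S.unpairedAt u ∧ ¬ ∃ m ∈ S.pairs, m.1 < u ∧ u < m.2
/-- Motif m₅ : a tree node (possibly the root) of degree greater than four. -/
def hasM5 (S : SecStr) : Prop := 4 < S.rootDeg ∨ ∃ p ∈ S.pairs, 4 < S.pairDeg p
/-- Motif m₃∘ : a node with an unpaired child and degree greater than two. -/
def hasM3o (S : SecStr) : Prop :=
  (∃ q ∈ S.pairs, (∃ u, S.unpChildOfPair q u) ∧ 2 < S.pairDeg q) ∨
  ((∃ u, S.unpChildOfRoot u) ∧ 2 < S.rootDeg)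

/- Colorings of the tree representation. -/
inductive Col | black | white | gray
deriving DecidableEq

noncomputable def childCount (S : SecStr) (col : ℕ × ℕ → Col) (q : ℕ × ℕ) (c : Col) : ℕ :=
  (S.pairs.filter (fun p => S.isParentOf q p ∧ col p = c)).card
noncomputable def rootChildCount (S : SecStr) (col : ℕ × ℕ → Col) (c : Col) : ℕ :=
  (S.pairs.filter (fun p => ¬ S.hasParent p ∧ col p = c)).card

/-- A proper coloring of the tree representation. -/
def properCol (S : SecStr) (col : ℕ × ℕ → Col) : Prop :=
  rootChildCount S col .black ≤ 1 ∧ rootChildCount S col .white ≤ 1 ∧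
  rootChildCount S col .gray ≤ 2 ∧
  ∀ q ∈ S.pairs,
    childCount S col q .black ≤ 1 ∧ childCount S col q .white ≤ 1 ∧
    childCount S col q .gray ≤ 2 ∧
    childCount S col q (col q) ≤ 1 ∧
    (col q = .black → ∀ p ∈ S.pairs, S.isParentOf q p → col p ≠ .white) ∧
    (col q = .white → ∀ p ∈ S.pairs, S.isParentOf q p → col p ≠ .black)

/-- Level of a paired node: #black minus #white on the path to the root (incl. itself). -/
noncomputable def pairLvl (S : SecStr) (col : ℕ × ℕ → Col) (p : ℕ × ℕ) : ℤ :=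
  ((S.pairs.filter (fun q => q.1 ≤ p.1 ∧ p.2 ≤ q.2 ∧ col q = .black)).card : ℤ) -
  ((S.pairs.filter (fun q => q.1 ≤ p.1 ∧ p.2 ≤ q.2 ∧ col q = .white)).card : ℤ)
/-- Level of an unpaired node. -/
noncomputable def unpLvl (S : SecStr) (col : ℕ × ℕ → Col) (u : ℕ) : ℤ :=
  ((S.pairs.filter (fun q => q.1 < u ∧ u < q.2 ∧ col q = .black)).card : ℤ) -
  ((S.pairs.filter (fun q => q.1 < u ∧ u < q.2 ∧ col q = .white)).card : ℤ)

/-- Separated coloring: gray-node levels and unpaired-node levels are disjoint. -/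
def separatedCol (S : SecStr) (col : ℕ × ℕ → Col) : Prop :=
  ∀ p ∈ S.pairs, col p = .gray → ∀ u, S.unpairedAt u →
    pairLvl S col p ≠ unpLvl S col u

/-- A bipartite energy model: its compatibility graph is bipartite. -/
def Bipartite {α : Type*} (R : α → α → Prop) : Prop :=
  ∃ f : α → Bool, ∀ a b, R a b → f a ≠ f b

/-- The k-stutter of a sequence. -/
def stutterSeq {α : Type*} (w : List α) (k : ℕ) : List α :=
  w.flatMap (fun a => List.replicate k a)
/-- The base pairs of the k-stutter of a structure. -/
def stutterPairs (S : SecStr) (k : ℕ) : Finset (ℕ × ℕ) :=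
  S.pairs.biUnion (fun p => (Finset.range k).image
    (fun m => (k * p.1 + m, k * p.2 + (k - 1 - m))))

/-- Two base pairs belong to the same band (maximal stack) of S. -/
def sameBand (S : SecStr) (p p' : ℕ × ℕ) : Prop :=
  p ∈ S.pairs ∧ p' ∈ S.pairs ∧ p.1 + p.2 = p'.1 + p'.2 ∧
  ∀ x, min p.1 p'.1 ≤ x → x ≤ max p.1 p'.1 → (x, p.1 + p.2 - x) ∈ S.pairs

/-- Nussinov-Jacobson energies: a for G-C, b for A-U, g for G-U. -/
def njE (a b g : ℝ) : Base → Base → ℝ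
  | .G, .C => a | .C, .G => a
  | .A, .U => b | .U, .A => b
  | .G, .U => g | .U, .G => g
  | _, _ => 0

/-- level of position i : #G minus #C in the prefix of w ending at i. -/
def lvl (w : List Base) (i : ℕ) : ℤ :=
  ((w.take (i+1)).count Base.G : ℤ) - ((w.take (i+1)).count Base.C : ℤ)


namespace Stmt7

/-! ### Complement -/

def comp : Base → Base
  | .A => .U | .U => .A | .C => .G | .G => .C

@[simp] lemma comp_comp (x : Base) : comp (comp x) = x := by cases x <;> rfl

lemma wc_iff {x y : Base} : wcPair x y ↔ y = comp x := by
  cases x <;> cases y <;> simp [wcPair, comp]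

lemma wc_comp (x : Base) : wcPair x (comp x) := wc_iff.mpr rfl

lemma comp_inj {x y : Base} (h : comp x = comp y) : x = y := by
  cases x <;> cases y <;> simp_all [comp]

/-! ### Stack reduction machine -/

def step (st : List Base) (c : Base) : List Base :=
  match st with
  | [] => [c]
  | t :: r => if t = comp c then r else c :: t :: r

def stk (w : List Base) : List Base := w.foldl step []

def RedStk (st : List Base) : Prop := List.Chain' (fun x y => x ≠ comp y) st

lemma redStk_step {st : List Base} (h : RedStk st) (c : Base) : RedStk (step st c) := by
  cases st with
  | nil => simp [step, RedStk, List.Chain']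
  | cons t r =>
    by_cases hc : t = comp c
    · simpa [step, hc, RedStk, List.Chain'] using (List.IsChain.tail h)
    · have hct : c ≠ comp t := by
        intro hh; exact hc (by rw [hh, comp_comp])
      simpa [step, hc, RedStk, List.Chain'] using (List.isChain_cons_cons (R := fun x y => x ≠ comp y)).mpr ⟨hct, h⟩

lemma redStk_foldl {st : List Base} (h : RedStk st) (u : List Base) :
    RedStk (u.foldl step st) := by
  induction u generalizing st with
  | nil => exact h
  | cons c u ih => exact ih (redStk_step h c)

lemma redStk_stk (w : List Base) : RedStk (stk w) := redStk_foldl (by simp [RedStk, List.Chain']) w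

lemma step_step_cancel {σ : List Base} (h : RedStk σ) (c : Base) :
    step (step σ c) (comp c) = σ := by
  cases σ with
  | nil => simp [step]
  | cons t r =>
    by_cases hc : t = comp c
    · simp only [step, if_pos hc]
      cases r with
      | nil => simp [step, hc]
      | cons t' r' =>
        have hne : t ≠ comp t' := (List.isChain_cons_cons.mp h).1
        have htc : t' ≠ c := by
          intro hh; exact hne (by rw [hc, hh])
        simp [step, htc, hc]
    · simp [step, hc, comp_comp]

lemma foldl_cancel_pair {σ : List Base} (h : RedStk σ) (x y : List Base) (c : Base) :
    (x ++ c :: comp c :: y).foldl step σ = (x ++ y).foldl step σ := by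
  have hσ' : RedStk (x.foldl step σ) := redStk_foldl h x
  simp only [List.foldl_append, List.foldl_cons]
  rw [step_step_cancel hσ' c]

lemma stk_cancel_pair (x y : List Base) (c : Base) :
    stk (x ++ c :: comp c :: y) = stk (x ++ y) :=
  foldl_cancel_pair (by simp [RedStk, List.Chain']) x y c

lemma cancel_or_reduced (w : List Base) :
    (∃ x c y, w = x ++ c :: comp c :: y) ∨ stk w = w.reverse := by
  induction w using List.reverseRecOn with
  | nil => right; rfl
  | append_singleton w' c ih =>
    rcases ih with ⟨x, c', y, rfl⟩ | h
    · exact Or.inl ⟨x, c', y ++ [c], by simp⟩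
    · have hstep : stk (w' ++ [c]) = step w'.reverse c := by
        simp [stk, List.foldl_append]; rw [← h]; rfl
      cases hw : w'.reverse with
      | nil =>
        right
        have : w' = [] := by simpa using congrArg List.reverse hw
        subst this; rfl
      | cons d r =>
        by_cases hd : d = comp c
        · left
          have hw' : w' = r.reverse ++ [d] := by
            have := congrArg List.reverse hw
            simpa using this
          refine ⟨r.reverse, d, [], ?_⟩
          have : c = comp d := by rw [hd, comp_comp]
          rw [hw', this]; simp
        · right
          rw [hstep, hw]
          simp [step, hd, ← hw]

lemma foldl_of_stk_nil_aux : ∀ (n : ℕ) (u : List Base), u.length ≤ n → stk u = [] →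
    ∀ σ : List Base, RedStk σ → u.foldl step σ = σ := by
  intro n
  induction n with
  | zero =>
    intro u hlen _ σ _
    have : u = [] := List.length_eq_zero_iff.mp (Nat.le_zero.mp hlen)
    subst this; rfl
  | succ n ih =>
    intro u hlen hu σ hσ
    rcases cancel_or_reduced u with ⟨x, c, y, rfl⟩ | hred
    · have h1 : stk (x ++ y) = [] := by rw [← stk_cancel_pair x y c]; exact hu
      have hlen' : (x ++ y).length ≤ n := by
        simp only [List.length_append, List.length_cons] at hlen ⊢; omega
      rw [foldl_cancel_pair hσ x y c]
      exact ih _ hlen' h1 σ hσ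
    · rw [hu] at hred
      have : u = [] := by simpa using congrArg List.reverse hred.symm
      subst this; rfl

lemma foldl_of_stk_nil {u : List Base} (hu : stk u = []) {σ : List Base} (hσ : RedStk σ) :
    u.foldl step σ = σ :=
  foldl_of_stk_nil_aux u.length u le_rfl hu σ hσ



/-! ### getD helpers -/

lemma getD_take {α : Type*} [Inhabited α] (w : List α) {c i : ℕ} (h : i < c) :
    (w.take c).getD i default = w.getD i default := by
  simp [List.getD_eq_getElem?_getD, List.getElem?_take, h]

lemma getD_drop {α : Type*} [Inhabited α] (w : List α) (c j : ℕ) :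
    (w.drop c).getD j default = w.getD (c + j) default := by
  simp [List.getD_eq_getElem?_getD, List.getElem?_drop]

lemma getD_append_left {α : Type*} [Inhabited α] (x z : List α) {i : ℕ} (h : i < x.length) :
    (x ++ z).getD i default = x.getD i default := by
  simp [List.getD_eq_getElem?_getD, List.getElem?_append_left, h]

lemma getD_append_right {α : Type*} [Inhabited α] (x z : List α) (k : ℕ) :
    (x ++ z).getD (x.length + k) default = z.getD k default := by
  simp [List.getD_eq_getElem?_getD, List.getElem?_append_right, Nat.add_sub_cancel_left]

/-! ### Basic SecStr lemmas -/

lemma SecStr.ext' {S T : SecStr} (hlen : S.len = T.len) (hp : S.pairs = T.pairs) : S = T := by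
  cases S; cases T; dsimp at hlen hp; subst hlen; subst hp; rfl

lemma eq_of_fst_eq {S : SecStr} {p q : ℕ × ℕ} (hp : p ∈ S.pairs) (hq : q ∈ S.pairs)
    (h : p.1 = q.1) : p = q := by
  by_contra hne
  exact (S.once p hp q hq hne).1 h

lemma pair_at_zero {S : SecStr} (hs : S.saturated) (h : 0 < S.len) :
    ∃ m, (0, m) ∈ S.pairs := by
  obtain ⟨p, hp, hp0⟩ := hs 0 h
  obtain ⟨p1, p2⟩ := p
  rcases hp0 with h1 | h2
  · dsimp at h1; subst h1; exact ⟨p2, hp⟩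
  · exfalso; have := S.lt _ hp; dsimp at h2; omega

lemma closure {S : SecStr} {m : ℕ} (h0 : (0, m) ∈ S.pairs) {q : ℕ × ℕ} (hq : q ∈ S.pairs)
    (h1 : q.1 ≤ m) : q.2 ≤ m := by
  by_cases hqm : q = (0, m)
  · subst hqm; exact le_rfl
  · have honce := S.once q hq _ h0 hqm
    have hnc := S.noncross _ h0 q hq
    dsimp only at honce hnc
    have hlt := S.lt q hq
    omega

/-! ### Surgery: left restriction -/

def restrictLeft (S : SecStr) (c : ℕ) : SecStr where
  len := c
  pairs := S.pairs.filter (fun p => p.2 < c)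
  lt := fun p hp => S.lt p (Finset.mem_filter.mp hp).1
  ub := fun p hp => (Finset.mem_filter.mp hp).2
  once := fun p hp q hq => S.once p (Finset.mem_filter.mp hp).1 q (Finset.mem_filter.mp hq).1
  noncross := fun p hp q hq => S.noncross p (Finset.mem_filter.mp hp).1 q (Finset.mem_filter.mp hq).1

lemma restrictLeft_saturated {S : SecStr} (hs : S.saturated) {c : ℕ} (hc : c ≤ S.len)
    (hcl : ∀ p ∈ S.pairs, p.1 < c → p.2 < c) : (restrictLeft S c).saturated := by
  intro i hi
  obtain ⟨p, hp, hp0⟩ := hs i (lt_of_lt_of_le hi hc)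
  refine ⟨p, Finset.mem_filter.mpr ⟨hp, ?_⟩, hp0⟩
  rcases hp0 with h1 | h2
  · exact hcl p hp (h1 ▸ hi)
  · exact h2 ▸ hi

lemma restrictLeft_compat {w : List Base} {S : SecStr} (hc : compat wcPair w S) {c : ℕ}
    (hcw : c ≤ w.length) : compat wcPair (w.take c) (restrictLeft S c) := by
  constructor
  · simpa [restrictLeft] using (Nat.min_eq_left hcw).symm
  · intro p hp
    have hm := Finset.mem_filter.mp hp
    have h2 : p.2 < c := hm.2
    have h1 : p.1 < c := lt_trans (S.lt p hm.1) h2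
    rw [getD_take _ h1, getD_take _ h2]
    exact hc.2 p hm.1

lemma restrictLeft_mem {S : SecStr} {c : ℕ} {p : ℕ × ℕ} (hp : p ∈ S.pairs) (h : p.2 < c) :
    p ∈ (restrictLeft S c).pairs := Finset.mem_filter.mpr ⟨hp, h⟩

/-! ### Surgery: right restriction -/

def restrictRight (S : SecStr) (c : ℕ) : SecStr where
  len := S.len - c
  pairs := (S.pairs.filter (fun p => c ≤ p.1)).image (fun p => (p.1 - c, p.2 - c))
  lt := by
    intro p hp
    obtain ⟨q, hq, rfl⟩ := Finset.mem_image.mp hp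
    obtain ⟨hq1, hq2⟩ := Finset.mem_filter.mp hq
    have := S.lt q hq1
    dsimp only; omega
  ub := by
    intro p hp
    obtain ⟨q, hq, rfl⟩ := Finset.mem_image.mp hp
    obtain ⟨hq1, hq2⟩ := Finset.mem_filter.mp hq
    have h1 := S.ub q hq1
    have h2 := S.lt q hq1
    dsimp only; omega
  once := by
    intro p hp q hq hne
    obtain ⟨p', hp', rfl⟩ := Finset.mem_image.mp hp
    obtain ⟨q', hq', rfl⟩ := Finset.mem_image.mp hq
    obtain ⟨hp'1, hp'2⟩ := Finset.mem_filter.mp hp'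
    obtain ⟨hq'1, hq'2⟩ := Finset.mem_filter.mp hq'
    have hlp := S.lt p' hp'1
    have hlq := S.lt q' hq'1
    have hne' : p' ≠ q' := by rintro rfl; exact hne rfl
    have ho := S.once p' hp'1 q' hq'1 hne'
    dsimp only at *
    omega
  noncross := by
    intro p hp q hq
    obtain ⟨p', hp', rfl⟩ := Finset.mem_image.mp hp
    obtain ⟨q', hq', rfl⟩ := Finset.mem_image.mp hq
    obtain ⟨hp'1, hp'2⟩ := Finset.mem_filter.mp hp'
    obtain ⟨hq'1, hq'2⟩ := Finset.mem_filter.mp hq'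
    have hlp := S.lt p' hp'1
    have hlq := S.lt q' hq'1
    have hnc := S.noncross p' hp'1 q' hq'1
    dsimp only at *
    omega
  

lemma restrictRight_saturated {S : SecStr} (hs : S.saturated) {c : ℕ}
    (hcr : ∀ p ∈ S.pairs, p.1 < c → p.2 < c) : (restrictRight S c).saturated := by
  intro i hi
  have hi' : c + i < S.len := by
    have : i < S.len - c := hi
    omega
  obtain ⟨p, hp, hp0⟩ := hs (c + i) hi'
  have hlt := S.lt p hp
  have hc1 : c ≤ p.1 := by
    by_contra hcon
    have := hcr p hp (by omega)
    omega
  refine ⟨(p.1 - c, p.2 - c),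
    Finset.mem_image.mpr ⟨p, Finset.mem_filter.mpr ⟨hp, hc1⟩, rfl⟩, ?_⟩
  dsimp only
  omega

lemma restrictRight_compat {w : List Base} {S : SecStr} (hc : compat wcPair w S) (c : ℕ) :
    compat wcPair (w.drop c) (restrictRight S c) := by
  constructor
  · simp [restrictRight, hc.1]
  · intro p hp
    obtain ⟨q, hq, rfl⟩ := Finset.mem_image.mp hp
    obtain ⟨hq1, hq2⟩ := Finset.mem_filter.mp hq
    have hlt := S.lt q hq1
    have e1 : c + (q.1 - c) = q.1 := by omega
    have e2 : c + (q.2 - c) = q.2 := by omega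
    dsimp only
    rw [getD_drop, getD_drop, e1, e2]
    exact hc.2 q hq1

/-! ### Surgery: unwrap an enclosing pair -/

lemma unwrap_bounds {S : SecStr} (h0 : (0, S.len - 1) ∈ S.pairs) {q : ℕ × ℕ}
    (hq : q ∈ S.pairs.erase (0, S.len - 1)) :
    1 ≤ q.1 ∧ q.1 < q.2 ∧ q.2 ≤ S.len - 2 := by
  have hq' := Finset.mem_of_mem_erase hq
  have hne := Finset.ne_of_mem_erase hq
  have honce := S.once q hq' _ h0 hne
  have hl := S.lt q hq'
  have hu := S.ub q hq'
  have hl0 := S.lt _ h0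
  dsimp only at honce hl0
  omega

def unwrap (S : SecStr) (h0 : (0, S.len - 1) ∈ S.pairs) : SecStr where
  len := S.len - 2
  pairs := (S.pairs.erase (0, S.len - 1)).image (fun p => (p.1 - 1, p.2 - 1))
  lt := by
    intro p hp
    obtain ⟨q, hq, rfl⟩ := Finset.mem_image.mp hp
    have := unwrap_bounds h0 hq
    dsimp only; omega
  ub := by
    intro p hp
    obtain ⟨q, hq, rfl⟩ := Finset.mem_image.mp hp
    have := unwrap_bounds h0 hq
    dsimp only; omega
  once := by
    intro p hp q hq hne
    obtain ⟨p', hp', rfl⟩ := Finset.mem_image.mp hp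
    obtain ⟨q', hq', rfl⟩ := Finset.mem_image.mp hq
    have hbp := unwrap_bounds h0 hp'
    have hbq := unwrap_bounds h0 hq'
    have hne' : p' ≠ q' := by rintro rfl; exact hne rfl
    have ho := S.once p' (Finset.mem_of_mem_erase hp') q' (Finset.mem_of_mem_erase hq') hne'
    dsimp only at *
    omega
  noncross := by
    intro p hp q hq
    obtain ⟨p', hp', rfl⟩ := Finset.mem_image.mp hp
    obtain ⟨q', hq', rfl⟩ := Finset.mem_image.mp hq
    have hbp := unwrap_bounds h0 hp'
    have hbq := unwrap_bounds h0 hq'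
    have hnc := S.noncross p' (Finset.mem_of_mem_erase hp') q' (Finset.mem_of_mem_erase hq')
    dsimp only at *
    omega

lemma unwrap_saturated {S : SecStr} (hs : S.saturated) (h0 : (0, S.len - 1) ∈ S.pairs) :
    (unwrap S h0).saturated := by
  intro i hi
  have hi2 : i < S.len - 2 := hi
  have hl0 := S.lt _ h0
  dsimp only at hl0
  obtain ⟨p, hp, hp0⟩ := hs (i + 1) (by omega)
  have hpe : p ≠ (0, S.len - 1) := by
    rintro rfl
    dsimp only at hp0
    omega
  have hpm : p ∈ S.pairs.erase (0, S.len - 1) := Finset.mem_erase.mpr ⟨hpe, hp⟩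
  have hb := unwrap_bounds h0 hpm
  refine ⟨(p.1 - 1, p.2 - 1), Finset.mem_image.mpr ⟨p, hpm, rfl⟩, ?_⟩
  dsimp only
  omega

lemma unwrap_compat {w : List Base} {S : SecStr} (hc : compat wcPair w S)
    (h0 : (0, S.len - 1) ∈ S.pairs) :
    compat wcPair ((w.drop 1).take (S.len - 2)) (unwrap S h0) := by
  have hl0 := S.lt _ h0
  dsimp only at hl0
  have hwlen : S.len = w.length := hc.1
  constructor
  · simp [unwrap]; omega
  · intro p hp
    obtain ⟨q, hq, rfl⟩ := Finset.mem_image.mp hp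
    have hb := unwrap_bounds h0 hq
    dsimp only
    rw [getD_take _ (by omega : q.1 - 1 < S.len - 2), getD_take _ (by omega : q.2 - 1 < S.len - 2),
      getD_drop, getD_drop]
    have e1 : 1 + (q.1 - 1) = q.1 := by omega
    have e2 : 1 + (q.2 - 1) = q.2 := by omega
    rw [e1, e2]
    exact hc.2 q (Finset.mem_of_mem_erase hq)

/-! ### Surgery: insert an adjacent pair -/

def ψ (i j : ℕ) : ℕ := if j < i then j else j + 2

lemma ψ_lt_iff {i a b : ℕ} : ψ i a < ψ i b ↔ a < b := by
  unfold ψ; split_ifs <;> omega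

lemma ψ_inj {i a b : ℕ} (h : ψ i a = ψ i b) : a = b := by
  unfold ψ at h; split_ifs at h <;> omega

lemma ψ_ne_i {i j : ℕ} : ψ i j ≠ i ∧ ψ i j ≠ i + 1 := by
  unfold ψ; split_ifs <;> omega

def insertAdj (S : SecStr) (i : ℕ) (hi : i ≤ S.len) : SecStr where
  len := S.len + 2
  pairs := insert (i, i + 1) (S.pairs.image (fun p => (ψ i p.1, ψ i p.2)))
  lt := by
    intro p hp
    rcases Finset.mem_insert.mp hp with rfl | hp
    · dsimp only; omega
    · obtain ⟨q, hq, rfl⟩ := Finset.mem_image.mp hp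
      exact ψ_lt_iff.mpr (S.lt q hq)
  ub := by
    intro p hp
    rcases Finset.mem_insert.mp hp with rfl | hp
    · dsimp only; omega
    · obtain ⟨q, hq, rfl⟩ := Finset.mem_image.mp hp
      have := S.ub q hq
      dsimp only; unfold ψ; split_ifs <;> omega
  once := by
    intro p hp q hq hne
    rcases Finset.mem_insert.mp hp with rfl | hp <;>
      rcases Finset.mem_insert.mp hq with rfl | hq
    · exact absurd rfl hne
    · obtain ⟨q', hq', rfl⟩ := Finset.mem_image.mp hq
      have h1 := (ψ_ne_i (i := i) (j := q'.1))
      have h2 := (ψ_ne_i (i := i) (j := q'.2))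
      dsimp only
      exact ⟨fun h => h1.1 h.symm, fun h => h2.1 h.symm, fun h => h1.2 h.symm,
        fun h => h2.2 h.symm⟩
    · obtain ⟨p', hp', rfl⟩ := Finset.mem_image.mp hp
      have h1 := (ψ_ne_i (i := i) (j := p'.1))
      have h2 := (ψ_ne_i (i := i) (j := p'.2))
      dsimp only
      exact ⟨h1.1, h1.2, h2.1, h2.2⟩
    · obtain ⟨p', hp', rfl⟩ := Finset.mem_image.mp hp
      obtain ⟨q', hq', rfl⟩ := Finset.mem_image.mp hq
      have hne' : p' ≠ q' := by rintro rfl; exact hne rfl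
      have ho := S.once p' hp' q' hq' hne'
      dsimp only
      exact ⟨fun h => ho.1 (ψ_inj h), fun h => ho.2.1 (ψ_inj h),
        fun h => ho.2.2.1 (ψ_inj h), fun h => ho.2.2.2 (ψ_inj h)⟩
  noncross := by
    intro p hp q hq
    rcases Finset.mem_insert.mp hp with rfl | hp <;>
      rcases Finset.mem_insert.mp hq with rfl | hq
    · dsimp only; omega
    · obtain ⟨q', hq', rfl⟩ := Finset.mem_image.mp hq
      dsimp only; omega
    · obtain ⟨p', hp', rfl⟩ := Finset.mem_image.mp hp
      dsimp only; omega
    · obtain ⟨p', hp', rfl⟩ := Finset.mem_image.mp hp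
      obtain ⟨q', hq', rfl⟩ := Finset.mem_image.mp hq
      have hnc := S.noncross p' hp' q' hq'
      dsimp only
      rw [ψ_lt_iff, ψ_lt_iff, ψ_lt_iff]
      exact hnc
  

lemma insertAdj_saturated {S : SecStr} (hs : S.saturated) {i : ℕ} (hi : i ≤ S.len) :
    (insertAdj S i hi).saturated := by
  intro j hj
  have hj' : j < S.len + 2 := hj
  by_cases hji : j = i ∨ j = i + 1
  · refine ⟨(i, i + 1), Finset.mem_insert_self _ _, ?_⟩
    dsimp only; omega
  · push_neg at hji
    by_cases hlt : j < i
    · obtain ⟨p, hp, hp0⟩ := hs j (by omega)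
      refine ⟨(ψ i p.1, ψ i p.2), Finset.mem_insert_of_mem (Finset.mem_image.mpr ⟨p, hp, rfl⟩), ?_⟩
      dsimp only
      have hψ : ∀ k, k = j → ψ i k = j := by intro k hk; unfold ψ; split_ifs <;> omega
      rcases hp0 with h | h
      · exact Or.inl (hψ _ h)
      · exact Or.inr (hψ _ h)
    · have hge : i + 2 ≤ j := by omega
      obtain ⟨p, hp, hp0⟩ := hs (j - 2) (by omega)
      refine ⟨(ψ i p.1, ψ i p.2), Finset.mem_insert_of_mem (Finset.mem_image.mpr ⟨p, hp, rfl⟩), ?_⟩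
      dsimp only
      have hψ : ∀ k, k = j - 2 → ψ i k = j := by intro k hk; unfold ψ; split_ifs <;> omega
      rcases hp0 with h | h
      · exact Or.inl (hψ _ h)
      · exact Or.inr (hψ _ h)

lemma insertAdj_compat {x y : List Base} {S : SecStr} (hc : compat wcPair (x ++ y) S) (c : Base)
    (hi : x.length ≤ S.len) :
    compat wcPair (x ++ c :: comp c :: y) (insertAdj S x.length hi) := by
  have hlen : S.len = x.length + y.length := by simpa using hc.1
  have hget : ∀ j, j < S.len → (x ++ c :: comp c :: y).getD (ψ x.length j) default
      = (x ++ y).getD j default := by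
    intro j hj
    by_cases h : j < x.length
    · rw [show ψ x.length j = j from by unfold ψ; split_ifs <;> omega]
      rw [getD_append_left _ _ h, getD_append_left _ _ h]
    · have hj2 : ψ x.length j = x.length + (j - x.length + 2) := by unfold ψ; split_ifs <;> omega
      have hj3 : j = x.length + (j - x.length) := by omega
      rw [hj2, getD_append_right, hj3, getD_append_right]
      simp only [List.getD_cons_succ]
      congr 1
      omega
  constructor
  · simp only [insertAdj, List.length_append, List.length_cons]
    omega
  · intro p hp
    rcases Finset.mem_insert.mp hp with rfl | hp
    · dsimp only
      have h1 : (x ++ c :: comp c :: y).getD x.length default = c := by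
        have := getD_append_right x (c :: comp c :: y) 0
        simpa using this
      have h2 : (x ++ c :: comp c :: y).getD (x.length + 1) default = comp c := by
        have := getD_append_right x (c :: comp c :: y) 1
        simpa using this
      rw [h1, h2]
      exact wc_comp c
    · obtain ⟨q, hq, rfl⟩ := Finset.mem_image.mp hp
      have hlt := S.lt q hq
      have hub := S.ub q hq
      dsimp only
      rw [hget _ (by omega), hget _ hub]
      exact hc.2 q hq


/-! ### Counting and design lemmas -/

lemma biUnion_endpoints_subset (S : SecStr) :
    S.pairs.biUnion (fun p => ({p.1, p.2} : Finset ℕ)) ⊆ Finset.range S.len := by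
  intro i hi
  obtain ⟨p, hp, hip⟩ := Finset.mem_biUnion.mp hi
  have h1 := S.lt p hp
  have h2 := S.ub p hp
  simp only [Finset.mem_insert, Finset.mem_singleton] at hip
  rcases hip with rfl | rfl
  · exact Finset.mem_range.mpr (by omega)
  · exact Finset.mem_range.mpr h2

lemma card_biUnion_endpoints (S : SecStr) :
    (S.pairs.biUnion (fun p => ({p.1, p.2} : Finset ℕ))).card = 2 * S.pairs.card := by
  rw [Finset.card_biUnion]
  · rw [Finset.sum_congr rfl (fun p hp => ?_), Finset.sum_const, smul_eq_mul, mul_comm]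
    rw [Finset.card_insert_of_notMem (by simp [Nat.ne_of_lt (S.lt p hp)]),
      Finset.card_singleton]
  · intro p hp q hq hne
    have ho := S.once p hp q hq hne
    rw [Function.onFun, Finset.disjoint_left]
    intro x hx hx'
    simp only [Finset.mem_insert, Finset.mem_singleton] at hx hx'
    obtain ⟨o1, o2, o3, o4⟩ := ho
    rcases hx with rfl | rfl <;> rcases hx' with h | h <;> omega

lemma two_mul_card_le (S : SecStr) : 2 * S.pairs.card ≤ S.len := by
  rw [← card_biUnion_endpoints]
  simpa using Finset.card_le_card (biUnion_endpoints_subset S)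

lemma saturated_two_mul_card {S : SecStr} (hs : S.saturated) : 2 * S.pairs.card = S.len := by
  rw [← card_biUnion_endpoints]
  have heq : S.pairs.biUnion (fun p => ({p.1, p.2} : Finset ℕ)) = Finset.range S.len := by
    refine Finset.Subset.antisymm (biUnion_endpoints_subset S) ?_
    intro i hi
    obtain ⟨p, hp, hip⟩ := hs i (Finset.mem_range.mp hi)
    refine Finset.mem_biUnion.mpr ⟨p, hp, ?_⟩
    simp only [Finset.mem_insert, Finset.mem_singleton]
    rcases hip with h | h
    · exact Or.inl h.symm
    · exact Or.inr h.symm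
  rw [heq, Finset.card_range]

lemma saturated_of_card {S : SecStr} (h : 2 * S.pairs.card = S.len) : S.saturated := by
  have heq : S.pairs.biUnion (fun p => ({p.1, p.2} : Finset ℕ)) = Finset.range S.len := by
    apply Finset.eq_of_subset_of_card_le (biUnion_endpoints_subset S)
    rw [card_biUnion_endpoints, Finset.card_range, h]
  intro i hi
  have : i ∈ S.pairs.biUnion (fun p => ({p.1, p.2} : Finset ℕ)) := by
    rw [heq]; exact Finset.mem_range.mpr hi
  obtain ⟨p, hp, hip⟩ := Finset.mem_biUnion.mp this
  simp only [Finset.mem_insert, Finset.mem_singleton] at hip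
  exact ⟨p, hp, by omega⟩

lemma energy_const (w : List Base) (S : SecStr) :
    energy (fun _ _ => (-1 : ℝ)) w S = -(S.pairs.card : ℝ) := by
  simp [energy]

lemma design_unique {w : List Base} {S : SecStr}
    (hd : isDesign wcPair (fun _ _ => (-1 : ℝ)) 1 w S) (hS : S.saturated)
    {S' : SecStr} (h' : compat wcPair w S') (hs' : S'.saturated) : S' = S := by
  by_contra hne
  have hge := hd.2 S' h' hne
  have e1 : 2 * S.pairs.card = S.len := saturated_two_mul_card hS
  have e2 : 2 * S'.pairs.card = S'.len := saturated_two_mul_card hs'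
  have hl : S.len = S'.len := by rw [hd.1.1, h'.1]
  have hcard : S.pairs.card = S'.pairs.card := by omega
  rw [energy_const, energy_const, hcard] at hge
  linarith

lemma design_of_unique {w : List Base} {S : SecStr} (hc : compat wcPair w S) (hS : S.saturated)
    (huniq : ∀ S', compat wcPair w S' → S'.saturated → S' = S) :
    isDesign wcPair (fun _ _ => (-1 : ℝ)) 1 w S := by
  refine ⟨hc, ?_⟩
  intro S' h' hne
  have hnotsat : ¬ S'.saturated := fun h => hne (huniq S' h' h)
  have h2 : 2 * S'.pairs.card ≤ S'.len := two_mul_card_le S'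
  have h3 : 2 * S'.pairs.card ≠ S'.len := fun h => hnotsat (saturated_of_card h)
  have e1 : 2 * S.pairs.card = S.len := saturated_two_mul_card hS
  have hlen : S'.len = S.len := by rw [h'.1, hc.1]
  have hcard : S'.pairs.card + 1 ≤ S.pairs.card := by omega
  rw [energy_const, energy_const]
  have hc' := (Nat.cast_le (α := ℝ)).mpr hcard
  push_cast at hc'
  linarith

/-! ### stk ↔ saturable -/

lemma saturable_nil : saturable wcPair ([] : List Base) := by
  refine ⟨⟨0, ∅, by simp, by simp, by simp, by simp⟩, ⟨rfl, by simp⟩, ?_⟩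
  intro i hi
  simp at hi

lemma headI_eq_getD {w : List Base} (hw : w ≠ []) : w.headI = w.getD 0 default := by
  cases w with
  | nil => exact absurd rfl hw
  | cons c w' => rfl

lemma stk_append_left {w z : List Base} (hw : stk w = []) : stk (w ++ z) = stk z := by
  have : stk (w ++ z) = z.foldl step (stk w) := by simp [stk, List.foldl_append]
  rw [this, hw]; rfl

lemma stk_of_saturable_aux : ∀ (n : ℕ) (w : List Base), w.length ≤ n →
    saturable wcPair w → stk w = [] := by
  intro n
  induction n with
  | zero =>
    intro w hw _
    have : w = [] := List.length_eq_zero_iff.mp (Nat.le_zero.mp hw)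
    subst this; rfl
  | succ n ih =>
    intro w hwlen hsat
    cases hw : w with
    | nil => rfl
    | cons c0 w' =>
    rw [← hw]
    obtain ⟨S, hcomp, hS⟩ := hsat
    have hlen : S.len = w.length := hcomp.1
    have hpos : 0 < S.len := by rw [hlen, hw]; simp
    obtain ⟨m, hm⟩ := pair_at_zero hS hpos
    have hlt0 : 0 < m := by have := S.lt _ hm; simpa using this
    have hub : m < S.len := S.ub _ hm
    have hcl : ∀ p ∈ S.pairs, p.1 < m + 1 → p.2 < m + 1 := by
      intro p hp hp1
      have := closure hm hp (by omega)
      omega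
    -- inner part
    have h0 : (0, (restrictLeft S (m+1)).len - 1) ∈ (restrictLeft S (m+1)).pairs := by
      show (0, (m+1) - 1) ∈ _
      simpa using restrictLeft_mem hm (by omega)
    have hinner_sat := unwrap_saturated (restrictLeft_saturated hS (by omega) hcl) h0
    have hinner_compat := unwrap_compat (restrictLeft_compat hcomp (by omega : m+1 ≤ w.length)) h0
    have hlist : ((w.take (m+1)).drop 1).take ((restrictLeft S (m+1)).len - 2)
        = (w.drop 1).take (m-1) := by
      show ((w.take (m+1)).drop 1).take ((m+1) - 2) = (w.drop 1).take (m-1)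
      rw [show m + 1 = 1 + m by omega, List.drop_take, List.take_take]
      congr 1
      omega
    rw [hlist] at hinner_compat
    have hinner : saturable wcPair ((w.drop 1).take (m-1)) := ⟨_, hinner_compat, hinner_sat⟩
    have hinner_stk : stk ((w.drop 1).take (m-1)) = [] := by
      apply ih _ _ hinner
      have : ((w.drop 1).take (m-1)).length ≤ m - 1 := by simp
      omega
    -- outer part
    have houter_sat := restrictRight_saturated hS (c := m+1) hcl
    have houter_compat := restrictRight_compat hcomp (m+1)
    have houter : saturable wcPair (w.drop (m+1)) := ⟨_, houter_compat, houter_sat⟩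
    have houter_stk : stk (w.drop (m+1)) = [] := by
      apply ih _ _ houter
      simp only [List.length_drop]
      omega
    -- letters
    have hwc := hcomp.2 _ hm
    dsimp only at hwc
    rw [wc_iff] at hwc
    -- decompose w
    have hdec : w = w.getD 0 default :: ((w.drop 1).take (m-1) ++
        (w.getD m default :: w.drop (m+1))) := by
      have h1 : w = w.getD 0 default :: w.drop 1 := by
        rw [hw]; rfl
      have h2 : w.drop 1 = (w.drop 1).take (m-1) ++ (w.drop 1).drop (m-1) := by
        rw [List.take_append_drop]
      have h3 : (w.drop 1).drop (m-1) = w.drop m := by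
        rw [List.drop_drop]
        congr 1
        omega
      have h4 : w.drop m = w.getD m default :: w.drop (m+1) := by
        rw [List.drop_eq_getElem_cons (by omega : m < w.length)]
        rw [List.getD_eq_getElem w default (by omega : m < w.length)]
      conv_lhs => rw [h1, h2, h3, h4]
    -- compute stk
    conv_lhs => rw [hdec]
    have hred : RedStk [w.getD 0 default] := by simp [RedStk, List.Chain']
    show List.foldl step [] (w.getD 0 default :: ((w.drop 1).take (m-1) ++
        (w.getD m default :: w.drop (m+1)))) = []
    rw [List.foldl_cons, show step [] (w.getD 0 default) = [w.getD 0 default] from rfl,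
      List.foldl_append, foldl_of_stk_nil hinner_stk hred, List.foldl_cons, hwc,
      show step [w.getD 0 default] (comp (w.getD 0 default)) = [] by simp [step]]
    exact houter_stk

lemma stk_of_saturable {w : List Base} (h : saturable wcPair w) : stk w = [] :=
  stk_of_saturable_aux w.length w le_rfl h

lemma saturable_of_stk_aux : ∀ (n : ℕ) (w : List Base), w.length ≤ n →
    stk w = [] → saturable wcPair w := by
  intro n
  induction n with
  | zero =>
    intro w hw _
    have : w = [] := List.length_eq_zero_iff.mp (Nat.le_zero.mp hw)
    subst this; exact saturable_nil
  | succ n ih =>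
    intro w hwlen hstk
    rcases cancel_or_reduced w with ⟨x, c, y, rfl⟩ | hred
    · have h1 : stk (x ++ y) = [] := by rw [← stk_cancel_pair x y c]; exact hstk
      have h2 : (x ++ y).length ≤ n := by
        simp only [List.length_append, List.length_cons] at hwlen ⊢
        omega
      obtain ⟨S, hcomp, hS⟩ := ih _ h2 h1
      have hi : x.length ≤ S.len := by
        rw [hcomp.1]; simp
      exact ⟨insertAdj S x.length hi, insertAdj_compat hcomp c hi, insertAdj_saturated hS hi⟩
    · rw [hstk] at hred
      have : w = [] := by simpa using congrArg List.reverse hred.symm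
      subst this; exact saturable_nil

lemma saturable_of_stk {w : List Base} (h : stk w = []) : saturable wcPair w :=
  saturable_of_stk_aux w.length w le_rfl h

/-! ### Boundaries of concatenations -/

def isBd (l : List (List Base)) (n : ℕ) : Prop :=
  ∃ s, n = ((l.take s).map List.length).sum

lemma isBd_zero (l : List (List Base)) : isBd l 0 := ⟨0, rfl⟩

lemma isBd_cons_build {w : List Base} {l : List (List Base)} {n : ℕ} (h : isBd l n) :
    isBd (w :: l) (w.length + n) := by
  obtain ⟨s, rfl⟩ := h
  exact ⟨s + 1, by simp⟩

lemma isBd_cons_dest {w : List Base} {l : List (List Base)} {n : ℕ} (h : isBd (w :: l) n) :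
    n = 0 ∨ ∃ n', n = w.length + n' ∧ isBd l n' := by
  obtain ⟨s, rfl⟩ := h
  cases s with
  | zero => exact Or.inl rfl
  | succ s => exact Or.inr ⟨((l.take s).map List.length).sum, by simp, ⟨s, rfl⟩⟩

lemma atomic_last {w : List Base} (h : atomicSaturable wcPair w) (hw : w ≠ []) :
    w.getD (w.length - 1) default = comp w.headI := by
  obtain ⟨S, hcomp, hsat⟩ := h.1
  have hlen : S.len = w.length := hcomp.1
  have hpos : 0 < S.len := by rw [hlen]; exact List.length_pos_iff.mpr hw
  obtain ⟨m, hm⟩ := pair_at_zero hsat hpos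
  have hub := S.ub _ hm
  have hlt0 := S.lt _ hm
  dsimp only at hub hlt0
  have hm1 : m = S.len - 1 := by
    by_contra hne
    have hcl : ∀ p ∈ S.pairs, p.1 < m + 1 → p.2 < m + 1 := by
      intro p hp hp1
      have := closure hm hp (by omega)
      omega
    have hsl := restrictLeft_saturated hsat (by omega) hcl
    have hcl2 := restrictLeft_compat hcomp (c := m+1) (by omega)
    exact h.2 (m+1) (by omega) (by omega) ⟨_, hcl2, hsl⟩
  have hwc := hcomp.2 _ hm
  dsimp only at hwc
  rw [wc_iff] at hwc
  rw [headI_eq_getD hw, ← hlen, ← hm1]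
  exact hwc

lemma align : ∀ (l : List (List Base)), (∀ w ∈ l, atomicSaturable wcPair w) →
    ∀ n, n ≤ l.flatten.length → stk (l.flatten.take n) = [] → isBd l n := by
  intro l
  induction l with
  | nil =>
    intro _ n hn _
    simp only [List.flatten_nil, List.length_nil, Nat.le_zero] at hn
    subst hn
    exact isBd_zero _
  | cons w l ih =>
    intro hat n hn hstk
    rw [List.flatten_cons] at hn hstk
    by_cases hcase : n ≤ w.length
    · have htake : (w ++ l.flatten).take n = w.take n := by
        rw [List.take_append, Nat.sub_eq_zero_of_le hcase]
        simp
      rw [htake] at hstk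
      have hsat : saturable wcPair (w.take n) := saturable_of_stk hstk
      rcases Nat.lt_or_ge n w.length with hlt | hge
      · rcases Nat.eq_zero_or_pos n with rfl | hpos
        · exact isBd_zero _
        · exact absurd hsat ((hat w (List.mem_cons_self (a := w) (l := l))).2 n hpos hlt)
      · have : n = w.length := le_antisymm hcase hge
        subst this
        simpa using isBd_cons_build (isBd_zero l)
    · push_neg at hcase
      have htake : (w ++ l.flatten).take n = w ++ l.flatten.take (n - w.length) := by
        rw [List.take_append, List.take_of_length_le (by omega)]
      rw [htake, stk_append_left (stk_of_saturable (hat w (List.mem_cons_self (a := w) (l := l))).1)] at hstk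
      have hbd := ih (fun w' hw' => hat w' (List.mem_cons_of_mem _ hw'))
        (n - w.length) (by simp at hn ⊢; omega) hstk
      have := isBd_cons_build (w := w) hbd
      rwa [show w.length + (n - w.length) = n by omega] at this

lemma bd_letter : ∀ (l : List (List Base)), (∀ w ∈ l, w ≠ []) → ∀ n, isBd l n →
    n < l.flatten.length → ∃ w ∈ l, l.flatten.getD n default = w.headI := by
  intro l
  induction l with
  | nil =>
    intro _ n _ hlt
    simp at hlt
  | cons w l ih =>
    intro hne n hbd hlt
    rw [List.flatten_cons] at hlt ⊢
    rcases isBd_cons_dest hbd with rfl | ⟨n', rfl, hbd'⟩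
    · refine ⟨w, List.mem_cons_self (a := w) (l := l), ?_⟩
      have hwne := hne w (List.mem_cons_self (a := w) (l := l))
      have hwpos : 0 < w.length := List.length_pos_iff.mpr hwne
      rw [getD_append_left _ _ hwpos, headI_eq_getD hwne]
    · have hlt' : n' < l.flatten.length := by rw [List.length_append] at hlt; omega
      obtain ⟨w', hw', heq⟩ := ih (fun w' hw' => hne w' (List.mem_cons_of_mem _ hw')) n' hbd' hlt'
      refine ⟨w', List.mem_cons_of_mem _ hw', ?_⟩
      rw [getD_append_right, heq]

lemma bd_last : ∀ (l : List (List Base)) (n : ℕ), isBd l n → 0 < n →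
    ∃ x w' y, l = x ++ w' :: y ∧ n = (x.map List.length).sum + w'.length ∧
      l.flatten.getD (n - 1) default = w'.getD (w'.length - 1) default := by
  intro l
  induction l with
  | nil =>
    intro n hbd hpos
    obtain ⟨s, rfl⟩ := hbd
    simp at hpos
  | cons w l ih =>
    intro n hbd hpos
    rcases isBd_cons_dest hbd with rfl | ⟨n', rfl, hbd'⟩
    · omega
    · rcases Nat.eq_zero_or_pos n' with rfl | hpos'
      · refine ⟨[], w, l, rfl, by simp, ?_⟩
        rw [List.flatten_cons, getD_append_left]
        · simp
        · omega
      · obtain ⟨x, w', y, rfl, hsum, hlet⟩ := ih n' hbd' hpos'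
        refine ⟨w :: x, w', y, rfl, by simp [hsum]; omega, ?_⟩
        rw [List.flatten_cons, show w.length + n' - 1 = w.length + (n' - 1) by omega,
          getD_append_right, hlet]

/-! ### Key prefix lemma -/

lemma inner_saturable {w : List Base} {S : SecStr} (hcomp : compat wcPair w S)
    (hS : S.saturated) {m : ℕ} (hm : (0, m) ∈ S.pairs) :
    saturable wcPair ((w.drop 1).take (m - 1)) := by
  have hub := S.ub _ hm
  have hlt0 := S.lt _ hm
  dsimp only at hub hlt0
  have hcl : ∀ p ∈ S.pairs, p.1 < m + 1 → p.2 < m + 1 := by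
    intro p hp hp1
    have := closure hm hp (by omega)
    omega
  have h0 : (0, (restrictLeft S (m+1)).len - 1) ∈ (restrictLeft S (m+1)).pairs := by
    show (0, (m+1) - 1) ∈ _
    simpa using restrictLeft_mem hm (by omega)
  have hlenw : S.len = w.length := hcomp.1
  have hinner_sat := unwrap_saturated (restrictLeft_saturated hS (by omega) hcl) h0
  have hinner_compat := unwrap_compat (restrictLeft_compat hcomp (by omega : m+1 ≤ w.length)) h0
  have hlist : ((w.take (m+1)).drop 1).take ((restrictLeft S (m+1)).len - 2)
      = (w.drop 1).take (m-1) := by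
    show ((w.take (m+1)).drop 1).take ((m+1) - 2) = (w.drop 1).take (m-1)
    rw [show m + 1 = 1 + m by omega, List.drop_take, List.take_take]
    congr 1
    omega
  rw [hlist] at hinner_compat
  exact ⟨_, hinner_compat, hinner_sat⟩

lemma key_prefix (l : List (List Base)) (hat : ∀ w ∈ l, atomicSaturable wcPair w)
    (hnel : ∀ w ∈ l, w ≠ []) (a b : Base) (hab : wcPair a b) (hbl : ∀ w ∈ l, w.headI ≠ b)
    (n : ℕ) (hn : n ≤ l.flatten.length) :
    ¬ saturable wcPair (a :: l.flatten.take n) := by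
  intro hsat
  obtain ⟨S, hcomp, hS⟩ := hsat
  set u := l.flatten.take n with hu
  have hulen : u.length = n := by
    rw [hu, List.length_take]
    omega
  have hlen : S.len = n + 1 := by
    rw [hcomp.1]
    simp [hulen]
  obtain ⟨m, hm⟩ := pair_at_zero hS (by omega)
  have hub := S.ub _ hm
  have hlt0 := S.lt _ hm
  dsimp only at hub hlt0
  have hwc := hcomp.2 _ hm
  dsimp only at hwc
  have hget0 : (a :: u).getD 0 default = a := rfl
  rw [hget0, wc_iff] at hwc
  have hcompa : comp a = b := (wc_iff.mp hab).symm
  have hinner := inner_saturable hcomp hS hm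
  have hdrop : (a :: u).drop 1 = u := rfl
  rw [hdrop] at hinner
  have htt : u.take (m - 1) = l.flatten.take (m - 1) := by
    rw [hu, List.take_take]
    congr 1
    omega
  rw [htt] at hinner
  have hstk : stk (l.flatten.take (m - 1)) = [] := stk_of_saturable hinner
  have hbd : isBd l (m - 1) := align l hat (m - 1) (by omega) hstk
  obtain ⟨w', hw', heq⟩ := bd_letter l hnel (m - 1) hbd (by omega)
  have hgm : (a :: u).getD m default = l.flatten.getD (m - 1) default := by
    have h1 : (a :: u).getD m default = u.getD (m - 1) default := by
      rw [show m = (m - 1) + 1 by omega]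
      simp [List.getD_cons_succ]
    rw [h1, hu, getD_take _ (by omega : m - 1 < n)]
  apply hbl w' hw'
  rw [← heq, ← hgm, hwc, hcompa]

/-! ### unionPairs and the main uniqueness lemma -/

def shiftPairs (P : Finset (ℕ × ℕ)) (c : ℕ) : Finset (ℕ × ℕ) :=
  P.image (fun p => (p.1 + c, p.2 + c))

def unionPairs : List (List Base × SecStr) → Finset (ℕ × ℕ)
  | [] => ∅
  | (w, S) :: r => S.pairs ∪ shiftPairs (unionPairs r) w.length

lemma main_uniq : ∀ (l : List (List Base × SecStr)),
    (∀ x ∈ l, isDesign wcPair (fun _ _ => (-1 : ℝ)) 1 x.1 x.2 ∧ x.2.saturated ∧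
      atomicSaturable wcPair x.1 ∧ x.1 ≠ []) →
    (l.map (fun x => x.1.headI)).Pairwise Ne →
    ∀ T : SecStr, compat wcPair ((l.map Prod.fst).flatten) T → T.saturated →
    T.pairs = unionPairs l := by
  intro l
  induction l with
  | nil =>
    intro _ _ T hcomp _
    have hl : T.len = 0 := by simpa using hcomp.1
    have : T.pairs = ∅ := by
      ext p
      simp only [Finset.notMem_empty, iff_false]
      intro hp
      have := T.ub p hp
      omega
    rw [this]
    rfl
  | cons x l ih =>
    obtain ⟨w, Sw⟩ := x
    intro hall hpw T hcomp hS
    set F := (l.map Prod.fst).flatten with hF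
    have hflat : ((((w, Sw) :: l).map Prod.fst).flatten) = w ++ F := by
      simp [hF]
    rw [hflat] at hcomp
    obtain ⟨hdes, hsatw, hatomw, hnew⟩ := hall _ (List.mem_cons_self)
    have hpw' : (w.headI :: l.map (fun x => x.1.headI)).Pairwise Ne := by
      rw [List.map_cons] at hpw
      exact hpw
    have hTlen : T.len = w.length + F.length := by
      rw [hcomp.1, List.length_append]
    have hwpos : 0 < w.length := List.length_pos_iff.mpr hnew
    obtain ⟨m, hm⟩ := pair_at_zero hS (by omega)
    have hub := T.ub _ hm
    have hlt0 := T.lt _ hm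
    dsimp only at hub hlt0
    have hcl : ∀ p ∈ T.pairs, p.1 < m + 1 → p.2 < m + 1 := by
      intro p hp hp1
      have := closure hm hp (by omega)
      omega
    -- the prefix of length m+1 is saturable, hence m+1 is a boundary
    have hpre : saturable wcPair ((w ++ F).take (m + 1)) :=
      ⟨restrictLeft T (m+1), restrictLeft_compat hcomp (by rw [List.length_append]; omega),
        restrictLeft_saturated hS (by omega) hcl⟩
    have hat' : ∀ w' ∈ w :: l.map Prod.fst, atomicSaturable wcPair w' := by
      intro w' hw'
      rcases List.mem_cons.mp hw' with rfl | hw'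
      · exact hatomw
      · obtain ⟨z, hz, rfl⟩ := List.mem_map.mp hw'
        exact (hall z (List.mem_cons_of_mem _ hz)).2.2.1
    have hflat2 : (w :: l.map Prod.fst).flatten = w ++ F := by simp [hF]
    have hbd : isBd (w :: l.map Prod.fst) (m + 1) := by
      apply align _ hat' (m+1)
      · rw [hflat2, List.length_append]; omega
      · rw [hflat2]; exact stk_of_saturable hpre
    obtain ⟨x, w', y, hxy, hsum, hlet⟩ := bd_last _ (m+1) hbd (by omega)
    -- the letter at position m
    have hwc := hcomp.2 _ hm
    dsimp only at hwc
    have hg0 : (w ++ F).getD 0 default = w.headI := by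
      rw [getD_append_left _ _ hwpos, headI_eq_getD hnew]
    rw [hg0, wc_iff] at hwc
    -- w' is atomic and nonempty
    have hw'mem : w' ∈ w :: l.map Prod.fst := by
      rw [hxy]
      exact List.mem_append.mpr (Or.inr (List.mem_cons_self))
    have hw'ne : w' ≠ [] := by
      rcases List.mem_cons.mp hw'mem with rfl | hw'
      · exact hnew
      · obtain ⟨z, hz, rfl⟩ := List.mem_map.mp hw'
        exact (hall z (List.mem_cons_of_mem _ hz)).2.2.2
    have hlast : w'.getD (w'.length - 1) default = comp w'.headI :=
      atomic_last (hat' w' hw'mem) hw'ne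
    have hheads : w.headI = w'.headI := by
      apply comp_inj
      rw [← hwc, ← hlast, ← hlet, hflat2]
      simp
    -- conclude m + 1 = w.length
    have hmw : m + 1 = w.length := by
      cases x with
      | nil =>
        simp only [List.nil_append, List.cons.injEq] at hxy
        rw [hsum, ← hxy.1]
        simp
      | cons x0 x' =>
        exfalso
        simp only [List.cons_append, List.cons.injEq] at hxy
        have hw'in : w' ∈ l.map Prod.fst := by
          rw [hxy.2]
          exact List.mem_append.mpr (Or.inr (List.mem_cons_self))
        obtain ⟨z, hz, hzw⟩ := List.mem_map.mp hw'in
        have : w.headI ≠ w'.headI := by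
          have hpc := (List.pairwise_cons.mp hpw').1
          apply hpc
          rw [← hzw]
          exact List.mem_map.mpr ⟨z, hz, rfl⟩
        exact this hheads
    -- split T at w.length
    have hclw : ∀ p ∈ T.pairs, p.1 < w.length → p.2 < w.length := by
      rw [← hmw]; exact hcl
    have hT0sat := restrictLeft_saturated hS (by omega) hclw
    have hT0compat := restrictLeft_compat hcomp
      (c := w.length) (by rw [List.length_append]; omega)
    rw [List.take_left] at hT0compat
    have hT0 : restrictLeft T w.length = Sw := design_unique hdes hsatw hT0compat hT0sat
    have hT1sat := restrictRight_saturated hS hclw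
    have hT1compat := restrictRight_compat hcomp w.length
    rw [List.drop_left] at hT1compat
    have hT1 : (restrictRight T w.length).pairs = unionPairs l := by
      apply ih (fun z hz => hall z (List.mem_cons_of_mem _ hz)) ?_ _ hT1compat hT1sat
      exact (List.pairwise_cons.mp hpw').2
    show T.pairs = Sw.pairs ∪ shiftPairs (unionPairs l) w.length
    rw [← hT0, ← hT1]
    ext p
    simp only [Finset.mem_union]
    constructor
    · intro hp
      by_cases h : p.2 < w.length
      · exact Or.inl (Finset.mem_filter.mpr ⟨hp, h⟩)
      · right
        have h1 : ¬ p.1 < w.length := fun hc => h (hclw p hp hc)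
        have hlt := T.lt p hp
        refine Finset.mem_image.mpr ⟨(p.1 - w.length, p.2 - w.length),
          Finset.mem_image.mpr ⟨p, Finset.mem_filter.mpr ⟨hp, by omega⟩, rfl⟩, ?_⟩
        dsimp only
        have : p = (p.1 - w.length + w.length, p.2 - w.length + w.length) := by
          rw [Prod.ext_iff]
          constructor <;> dsimp only <;> omega
        exact this.symm
    · intro hp
      rcases hp with hp | hp
      · exact (Finset.mem_filter.mp hp).1
      · obtain ⟨q, hq, hqp⟩ := Finset.mem_image.mp hp
        obtain ⟨r, hr, hrq⟩ := Finset.mem_image.mp hq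
        obtain ⟨hr1, hr2⟩ := Finset.mem_filter.mp hr
        have hlt := T.lt r hr1
        have : p = r := by
          rw [← hqp, ← hrq]
          rw [Prod.ext_iff]
          constructor <;> dsimp only <;> omega
        rw [this]
        exact hr1

/-! ### ofFn and flatten utilities -/

lemma getD_flatten_block : ∀ (x : List (List Base)) (w : List Base) (y : List (List Base))
    (j : ℕ), j < w.length →
    ((x ++ w :: y).flatten).getD ((x.map List.length).sum + j) default = w.getD j default := by
  intro x
  induction x with
  | nil =>
    intro w y j hj
    simp only [List.nil_append, List.flatten_cons, List.map_nil, List.sum_nil, Nat.zero_add]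
    exact getD_append_left _ _ hj
  | cons x0 x ih =>
    intro w y j hj
    simp only [List.cons_append, List.flatten_cons, List.map_cons, List.sum_cons]
    rw [Nat.add_assoc, getD_append_right]
    exact ih w y j hj

lemma flatten_decomp : ∀ (l : List (List Base)) (n : ℕ), n < l.flatten.length →
    ∃ x w y j, l = x ++ w :: y ∧ j < w.length ∧ n = (x.map List.length).sum + j := by
  intro l
  induction l with
  | nil => intro n hn; simp at hn
  | cons w l ih =>
    intro n hn
    rw [List.flatten_cons, List.length_append] at hn
    by_cases h : n < w.length
    · exact ⟨[], w, l, n, rfl, h, by simp⟩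
    · obtain ⟨x, w', y, j, hl, hj, hn'⟩ := ih (n - w.length) (by omega)
      refine ⟨w :: x, w', y, j, by rw [hl]; rfl, hj, ?_⟩
      simp only [List.map_cons, List.sum_cons]
      omega

lemma ofFn_take_sum {t : ℕ} (g : Fin t → ℕ) :
    ∀ k, k ≤ t → ((List.ofFn g).take k).sum
      = ∑ j ∈ Finset.univ.filter (fun j : Fin t => (j : ℕ) < k), g j := by
  intro k
  induction k with
  | zero =>
    intro _
    rw [List.take_zero]
    have : Finset.univ.filter (fun j : Fin t => (j : ℕ) < 0) = ∅ := by
      ext j; simp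
    rw [this]
    simp
  | succ k ih =>
    intro hk
    rw [List.take_succ, List.getElem?_eq_getElem (by simpa using hk), List.getElem_ofFn]
    rw [List.sum_append, ih (by omega)]
    have hins : Finset.univ.filter (fun j : Fin t => (j : ℕ) < k + 1)
        = insert (⟨k, by omega⟩ : Fin t) (Finset.univ.filter (fun j : Fin t => (j : ℕ) < k)) := by
      ext j
      simp only [Finset.mem_filter, Finset.mem_univ, true_and, Finset.mem_insert, Fin.ext_iff]
      omega
    rw [hins, Finset.sum_insert (by simp)]
    exact Nat.add_comm _ _

lemma ofFn_block {t : ℕ} {α : Type*} (f : Fin t → α) {x : List α} {w : α} {y : List α}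
    (hxy : List.ofFn f = x ++ w :: y) :
    ∃ i : Fin t, (i : ℕ) = x.length ∧ w = f i ∧ x = (List.ofFn f).take x.length := by
  have hlen : x.length < t := by
    have := congrArg List.length hxy
    simp only [List.length_ofFn, List.length_append, List.length_cons] at this
    omega
  refine ⟨⟨x.length, hlen⟩, rfl, ?_, ?_⟩
  · have hdrop : (List.ofFn f).drop x.length = w :: y := by rw [hxy, List.drop_left]
    have hcons := List.drop_eq_getElem_cons (l := List.ofFn f) (i := x.length)
      (by simpa using hlen)
    rw [hdrop, List.getElem_ofFn] at hcons
    exact (List.cons.injEq _ _ _ _ ▸ hcons).1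
  · rw [hxy, List.take_left]

lemma ofFn_decomp {t : ℕ} {α : Type*} (f : Fin t → α) (i : Fin t) :
    List.ofFn f = (List.ofFn f).take (i : ℕ) ++ f i :: (List.ofFn f).drop ((i : ℕ) + 1) := by
  conv_lhs => rw [← List.take_append_drop (i : ℕ) (List.ofFn f)]
  congr 1
  rw [List.drop_eq_getElem_cons (by simpa using i.isLt), List.getElem_ofFn]

lemma mem_unionPairs : ∀ (L : List (List Base × SecStr)) (q : ℕ × ℕ),
    q ∈ unionPairs L ↔ ∃ x w S y, L = x ++ (w, S) :: y ∧
      ∃ p ∈ S.pairs, q = (p.1 + ((x.map Prod.fst).map List.length).sum,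
        p.2 + ((x.map Prod.fst).map List.length).sum) := by
  intro L
  induction L with
  | nil =>
    intro q
    show q ∈ (∅ : Finset (ℕ × ℕ)) ↔ _
    simp only [Finset.notMem_empty, false_iff]
    rintro ⟨x, w, S, y, hxy, -⟩
    cases x <;> simp at hxy
  | cons z L ih =>
    obtain ⟨w0, S0⟩ := z
    intro q
    show q ∈ S0.pairs ∪ shiftPairs (unionPairs L) w0.length ↔ _
    rw [Finset.mem_union]
    constructor
    · rintro (hq | hq)
      · exact ⟨[], w0, S0, L, rfl, q, hq, by simp⟩
      · obtain ⟨r, hr, rfl⟩ := Finset.mem_image.mp hq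
        obtain ⟨x, w, S, y, hxy, p, hp, rfl⟩ := (ih r).mp hr
        refine ⟨(w0, S0) :: x, w, S, y, by rw [hxy]; rfl, p, hp, ?_⟩
        simp only [List.map_cons, List.sum_cons]
        rw [Prod.ext_iff]
        constructor <;> dsimp only <;> omega
    · rintro ⟨x, w, S, y, hxy, p, hp, rfl⟩
      cases x with
      | nil =>
        simp only [List.nil_append, List.cons.injEq, Prod.mk.injEq] at hxy
        obtain ⟨⟨rfl, rfl⟩, rfl⟩ := hxy
        left
        simpa using hp
      | cons x0 x' =>
        simp only [List.cons_append, List.cons.injEq] at hxy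
        obtain ⟨rfl, hxy2⟩ := hxy
        right
        refine Finset.mem_image.mpr ⟨(p.1 + ((x'.map Prod.fst).map List.length).sum,
          p.2 + ((x'.map Prod.fst).map List.length).sum), ?_, ?_⟩
        · exact (ih _).mpr ⟨x', w, S, y, hxy2, p, hp, rfl⟩
        · simp only [List.map_cons, List.sum_cons]
          rw [Prod.ext_iff]
          constructor <;> dsimp only <;> omega


end Stmt7

open Stmt7 in
/-- enclosing a concatenation of atomic saturable designs (with
pairwise distinct first letters, none equal to b) in a complementary pair a…b
yields an atomic saturable design for the enclosed structure. -/
theorem stmt7 (t : ℕ) (ws : Fin t → List Base) (Ss : Fin t → SecStr)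
    (a b : Base) (hab : wcPair a b)
    (hdes : ∀ i, isDesign wcPair (fun _ _ => (-1 : ℝ)) 1 (ws i) (Ss i))
    (hatom : ∀ i, atomicSaturable wcPair (ws i))
    (hsat : ∀ i, (Ss i).saturated)
    (hne : ∀ i, ws i ≠ [])
    (hb : ∀ i, (ws i).headI ≠ b)
    (hdist : ∀ i j, i ≠ j → (ws i).headI ≠ (ws j).headI)
    (W : List Base) (hW : W = a :: (List.ofFn ws).flatten ++ [b])
    (off : Fin t → ℕ)
    (hoff : ∀ i, off i = 1 + ∑ j ∈ Finset.univ.filter (· < i), (ws j).length)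
    (SW : SecStr) (hlen : SW.len = W.length)
    (hpairs : SW.pairs = insert (0, W.length - 1)
      (Finset.univ.biUnion
        (fun i => (Ss i).pairs.image (fun p => (p.1 + off i, p.2 + off i))))) :
    atomicSaturable wcPair W ∧ isDesign wcPair (fun _ _ => (-1 : ℝ)) 1 W SW := by
  classical
  set fl : List Base := (List.ofFn ws).flatten with hfl
  set l : List (List Base × SecStr) := List.ofFn (fun i => (ws i, Ss i)) with hl
  have hWform : W = a :: (fl ++ [b]) := by simp [hW, hfl]
  have hWlen : W.length = fl.length + 2 := by rw [hWform]; simp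
  have hSslen : ∀ i, (Ss i).len = (ws i).length := fun i => (hdes i).1.1
  have hlmapfst : l.map Prod.fst = List.ofFn ws := by
    rw [hl, List.map_ofFn]; rfl
  have hsum_take : ∀ k, k ≤ t → (((List.ofFn ws).take k).map List.length).sum
      = ∑ j ∈ Finset.univ.filter (fun j : Fin t => (j : ℕ) < k), (ws j).length := by
    intro k hk
    rw [List.map_take, List.map_ofFn]
    exact ofFn_take_sum _ k hk
  have hoff' : ∀ i : Fin t, off i
      = 1 + (((List.ofFn ws).take (i : ℕ)).map List.length).sum := by
    intro i
    rw [hoff i, hsum_take _ (le_of_lt i.isLt)]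
    have hfilter : (Finset.filter (fun x => x < i) Finset.univ)
        = (Finset.filter (fun j : Fin t => (j : ℕ) < (i : ℕ)) Finset.univ) := by
      ext j
      simp only [Finset.mem_filter, Finset.mem_univ, true_and, Fin.lt_def]
    rw [hfilter]
  have hsum_pairs : ∀ k, (((l.take k).map Prod.fst).map List.length).sum
      = (((List.ofFn ws).take k).map List.length).sum := by
    intro k
    rw [List.map_take, hlmapfst]
  -- getD correspondence
  have hgetW : ∀ (i : Fin t) (j : ℕ), j < (ws i).length →
      W.getD (j + off i) default = (ws i).getD j default := by
    intro i j hj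
    have hblock := getD_flatten_block ((List.ofFn ws).take (i : ℕ)) (ws i)
      ((List.ofFn ws).drop ((i : ℕ) + 1)) j hj
    rw [← ofFn_decomp ws i] at hblock
    have hltfl : (((List.ofFn ws).take (i : ℕ)).map List.length).sum + j < fl.length := by
      rw [hfl]
      conv_rhs => rw [ofFn_decomp ws i]
      rw [List.length_flatten, List.map_append, List.sum_append, List.map_cons, List.sum_cons]
      omega
    have hidx : j + off i = ((((List.ofFn ws).take (i : ℕ)).map List.length).sum + j) + 1 := by
      rw [hoff' i]; omega
    rw [hWform, hidx, List.getD_cons_succ, getD_append_left _ _ hltfl]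
    rw [← hfl] at hblock
    exact hblock
  -- last position of W is b
  have hgetb : W.getD (W.length - 1) default = b := by
    rw [hWform]
    have h1 : (a :: (fl ++ [b])).length - 1 = fl.length + 1 := by simp
    rw [h1, List.getD_cons_succ]
    have := getD_append_right fl [b] 0
    simpa using this
  have hget0 : W.getD 0 default = a := by rw [hWform]; rfl
  -- SW is compatible with W
  have hSWcompat : compat wcPair W SW := by
    refine ⟨hlen, ?_⟩
    intro p hp
    rw [hpairs] at hp
    rcases Finset.mem_insert.mp hp with rfl | hp
    · dsimp only
      rw [hget0, hgetb]
      exact hab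
    · obtain ⟨i, _, hpi⟩ := Finset.mem_biUnion.mp hp
      obtain ⟨q, hq, rfl⟩ := Finset.mem_image.mp hpi
      have hq2 : q.2 < (ws i).length := by rw [← hSslen i]; exact (Ss i).ub q hq
      have hq1 : q.1 < (ws i).length := lt_trans ((Ss i).lt q hq) hq2
      dsimp only
      rw [hgetW i q.1 hq1, hgetW i q.2 hq2]
      exact (hdes i).1.2 q hq
  -- SW is saturated
  have hSWsat : SW.saturated := by
    intro k hk
    rw [hlen, hWlen] at hk
    by_cases h0 : k = 0 ∨ k = fl.length + 1
    · refine ⟨(0, W.length - 1), by rw [hpairs]; exact Finset.mem_insert_self _ _, ?_⟩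
      dsimp only
      rw [hWlen]
      omega
    · push_neg at h0
      have hk1 : k - 1 < fl.length := by omega
      obtain ⟨x, w, y, j, hxy, hj, hkj⟩ := flatten_decomp (List.ofFn ws) (k - 1)
        (by rw [← hfl]; exact hk1)
      obtain ⟨i, hival, hweq, hxtake⟩ := ofFn_block ws hxy
      subst hweq
      have hsum : (x.map List.length).sum
          = (((List.ofFn ws).take (i : ℕ)).map List.length).sum := by
        rw [hxtake, hival]
      obtain ⟨q, hq, hq0⟩ := hsat i j (by rw [hSslen i]; exact hj)
      refine ⟨(q.1 + off i, q.2 + off i), ?_, ?_⟩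
      · rw [hpairs]
        exact Finset.mem_insert_of_mem (Finset.mem_biUnion.mpr
          ⟨i, Finset.mem_univ i, Finset.mem_image.mpr ⟨q, hq, rfl⟩⟩)
      · dsimp only
        rw [hoff' i]
        rcases hq0 with h | h
        · left; omega
        · right; omega
  have hsatW : saturable wcPair W := ⟨SW, hSWcompat, hSWsat⟩
  -- hypotheses in list form
  have hat_l : ∀ w' ∈ List.ofFn ws, atomicSaturable wcPair w' := by
    intro w' hw'
    obtain ⟨i, rfl⟩ := List.mem_ofFn.mp hw'
    exact hatom i
  have hne_l : ∀ w' ∈ List.ofFn ws, w' ≠ [] := by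
    intro w' hw'
    obtain ⟨i, rfl⟩ := List.mem_ofFn.mp hw'
    exact hne i
  have hb_l : ∀ w' ∈ List.ofFn ws, w'.headI ≠ b := by
    intro w' hw'
    obtain ⟨i, rfl⟩ := List.mem_ofFn.mp hw'
    exact hb i
  -- W is atomic saturable
  have hatomW : atomicSaturable wcPair W := by
    refine ⟨hsatW, ?_⟩
    intro k hk0 hkW hsatk
    rcases Nat.lt_or_ge k 2 with hk2 | hk2
    · have hk1 : k = 1 := by omega
      subst hk1
      have h1 : W.take 1 = [a] := by rw [hWform]; rfl
      rw [h1] at hsatk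
      have := stk_of_saturable hsatk
      simp [stk, step] at this
    · have hkfl : k - 1 ≤ fl.length := by rw [hWlen] at hkW; omega
      have htake : W.take k = a :: fl.take (k - 1) := by
        rw [hWform, show k = (k - 1) + 1 by omega, List.take_succ_cons]
        congr 1
        rw [List.take_append, Nat.sub_eq_zero_of_le hkfl]
        simp
      rw [htake] at hsatk
      exact key_prefix (List.ofFn ws) hat_l hne_l a b hab hb_l (k - 1)
        (by rw [← hfl]; exact hkfl) (by rw [hfl] at hsatk; exact hsatk)
  -- the bridge between unionPairs and the biUnion form
  have hbridge : shiftPairs (unionPairs l) 1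
      = Finset.univ.biUnion (fun i => (Ss i).pairs.image
        (fun p => (p.1 + off i, p.2 + off i))) := by
    ext q
    rw [Finset.mem_biUnion]
    unfold shiftPairs
    rw [Finset.mem_image]
    constructor
    · rintro ⟨r, hr, rfl⟩
      obtain ⟨x, w, S, y, hxy, p, hp, rfl⟩ := (mem_unionPairs l r).mp hr
      rw [hl] at hxy
      obtain ⟨i, hival, hwS, hxtake⟩ := ofFn_block _ hxy
      have hSeq : S = Ss i := congrArg Prod.snd hwS
      subst hSeq
      have hsum : ((x.map Prod.fst).map List.length).sum
          = (((List.ofFn ws).take (i : ℕ)).map List.length).sum := by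
        rw [hxtake, hival, ← hl, hsum_pairs]
      refine ⟨i, Finset.mem_univ i, Finset.mem_image.mpr ⟨p, hp, ?_⟩⟩
      rw [hoff' i, Prod.ext_iff]
      constructor <;> dsimp only <;> omega
    · rintro ⟨i, _, hq⟩
      obtain ⟨p, hp, rfl⟩ := Finset.mem_image.mp hq
      refine ⟨(p.1 + (((List.ofFn ws).take (i : ℕ)).map List.length).sum,
        p.2 + (((List.ofFn ws).take (i : ℕ)).map List.length).sum), ?_, ?_⟩
      · apply (mem_unionPairs l _).mpr
        refine ⟨l.take (i : ℕ), ws i, Ss i, l.drop ((i : ℕ) + 1), ?_, p, hp, ?_⟩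
        · rw [hl]; exact ofFn_decomp _ i
        · rw [hsum_pairs]
      · rw [hoff' i, Prod.ext_iff]
        constructor <;> dsimp only <;> omega
  -- uniqueness of the saturated compatible structure
  have huniq : ∀ S', compat wcPair W S' → S'.saturated → S' = SW := by
    intro S' hc' hs'
    have hlen' : S'.len = W.length := hc'.1
    obtain ⟨m, hm⟩ := pair_at_zero hs' (by rw [hlen', hWlen]; omega)
    have hub := S'.ub _ hm
    have hlt0 := S'.lt _ hm
    dsimp only at hub hlt0
    have hmtop : m = W.length - 1 := by
      by_contra hnem
      have hcl : ∀ p ∈ S'.pairs, p.1 < m + 1 → p.2 < m + 1 := by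
        intro p hp hp1
        have := closure hm hp (by omega)
        omega
      have hpre : saturable wcPair (W.take (m + 1)) :=
        ⟨restrictLeft S' (m + 1), restrictLeft_compat hc' (by rw [← hlen']; omega),
          restrictLeft_saturated hs' (by omega) hcl⟩
      exact hatomW.2 (m + 1) (by omega) (by rw [hlen'] at hub; omega) hpre
    have hmS : (0, S'.len - 1) ∈ S'.pairs := by
      rw [hlen', ← hmtop]
      exact hm
    have hTsat := unwrap_saturated hs' hmS
    have hTcompat := unwrap_compat hc' hmS
    have hlist : (W.drop 1).take (S'.len - 2) = fl := by
      rw [hWform, hlen', hWlen]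
      show (fl ++ [b]).take (fl.length + 2 - 2) = fl
      rw [show fl.length + 2 - 2 = fl.length by omega, List.take_left]
    rw [hlist] at hTcompat
    have hTpairs : (unwrap S' hmS).pairs = unionPairs l := by
      apply main_uniq l ?_ ?_ _ ?_ hTsat
      · intro z hz
        rw [hl] at hz
        obtain ⟨i, rfl⟩ := List.mem_ofFn.mp hz
        exact ⟨hdes i, hsat i, hatom i, hne i⟩
      · rw [hl, List.map_ofFn, List.pairwise_ofFn]
        intro i j hij
        exact hdist i j (Fin.ne_of_lt hij)
      · rw [hlmapfst, ← hfl]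
        exact hTcompat
    -- reconstruct S'
    have hrecon : S'.pairs = insert (0, W.length - 1) (shiftPairs (unwrap S' hmS).pairs 1) := by
      ext p
      rw [Finset.mem_insert]
      unfold shiftPairs
      rw [Finset.mem_image]
      constructor
      · intro hp
        by_cases hptop : p = (0, W.length - 1)
        · exact Or.inl hptop
        · right
          have hptop' : p ≠ (0, S'.len - 1) := by rw [hlen']; exact hptop
          have hpe : p ∈ S'.pairs.erase (0, S'.len - 1) := Finset.mem_erase.mpr ⟨hptop', hp⟩
          have hbnd := unwrap_bounds hmS hpe
          refine ⟨(p.1 - 1, p.2 - 1), Finset.mem_image.mpr ⟨p, hpe, rfl⟩, ?_⟩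
          rw [Prod.ext_iff]
          constructor <;> dsimp only <;> omega
      · intro hp
        rcases hp with rfl | ⟨q, hq, rfl⟩
        · have := hmS
          rwa [hlen'] at this
        · obtain ⟨r, hr, rfl⟩ := Finset.mem_image.mp hq
          have hbnd := unwrap_bounds hmS hr
          have heqr : ((r.1 - 1, r.2 - 1).1 + 1, (r.1 - 1, r.2 - 1).2 + 1) = r := by
            rw [Prod.ext_iff]
            constructor <;> dsimp only <;> omega
          rw [heqr]
          exact Finset.mem_of_mem_erase hr
    apply SecStr.ext' (by rw [hlen', hlen])
    rw [hrecon, hTpairs, hbridge, hpairs]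
  exact ⟨hatomW, design_of_unique hSWcompat hSWsat huniq⟩
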